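/- For positive integers n, k, m with k < n, one has ∑_{ν=k}^{n−1} ∫_{1/(ν+1)}^{1/ν} x^m (1−kx)^{n−2} dx = ∑_{μ=0}^{m} (1/k^{μ+1}) · (m!(n−2)!)/((m−μ)!(n+μ−1)!) · (n−k)^{n+μ−1}/n^{n+m−1}. -/

import Mathlib

open Finset


lemma tele (f : ℝ → ℝ) (hf : Continuous f) (k : ℕ) (hk : 0 < k) :
    ∀ N, k ≤ N → ∑ ν ∈ Finset.Icc k (N - 1),
      (∫ x in (1 / ((ν : ℝ) + 1))..(1 / (ν : ℝ)), f x)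
      = ∫ x in (1 / (N : ℝ))..(1 / (k : ℝ)), f x := by
  intro N
  induction N with
  | zero => intro h; omega
  | succ N ih =>
    intro h
    rcases Nat.lt_or_ge N k with h1 | h1
    · have : N + 1 = k := by omega
      subst this
      simp
    · have hIcc : Finset.Icc k (N + 1 - 1) = insert N (Finset.Icc k (N - 1)) := by
        rw [Nat.add_sub_cancel]
        ext x
        simp only [Finset.mem_Icc, Finset.mem_insert]
        omega
      rw [hIcc, Finset.sum_insert (by simp; omega), ih h1]
      have : (↑(N : ℕ) : ℝ) + 1 = ((N + 1 : ℕ) : ℝ) := by push_cast; ring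
      rw [this]
      exact intervalIntegral.integral_add_adjacent_intervals
        (hf.intervalIntegrable _ _) (hf.intervalIntegrable _ _)

set_option maxHeartbeats 1000000 in
lemma intJ (c a : ℝ) (hc : c ≠ 0) : ∀ (m : ℕ) (p : ℕ),
    (∫ x in a..(1/c), x ^ m * (1 - c * x) ^ p) =
      ∑ μ ∈ Finset.range (m + 1),
        (m.factorial : ℝ) / (m - μ).factorial * ((p.factorial : ℝ) / (p + μ + 1).factorial)
          * (1 / c ^ (μ + 1)) * a ^ (m - μ) * (1 - c * a) ^ (p + μ + 1) := by
  have h0 : 1 - c * (1 / c) = 0 := by field_simp; ring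
  have hderivF : ∀ (p : ℕ) (x : ℝ),
      HasDerivAt (fun y => -(1 / (c * (p + 1))) * (1 - c * y) ^ (p + 1)) ((1 - c * x) ^ p) x := by
    intro p x
    have hg : HasDerivAt (fun y : ℝ => 1 - c * y) (-c) x := by
      simpa using ((hasDerivAt_id x).const_mul c).const_sub 1
    have := ((hasDerivAt_pow (p + 1) (1 - c * x)).comp x hg).const_mul (-(1 / (c * (p + 1))))
    refine this.congr_deriv ?_
    have hp1 : ((p : ℝ) + 1) ≠ 0 := by positivity
    push_cast
    field_simp
  intro m
  induction m with
  | zero =>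
    intro p
    have key : (∫ x in a..(1/c), (1 : ℝ) * (1 - c * x) ^ p)
        = (-(1 / (c * (p + 1))) * (1 - c * (1/c)) ^ (p + 1))
          - (-(1 / (c * (p + 1))) * (1 - c * a) ^ (p + 1)) := by
      have : (∫ x in a..(1/c), (1 - c * x) ^ p)
          = (-(1 / (c * (p + 1))) * (1 - c * (1/c)) ^ (p + 1))
            - (-(1 / (c * (p + 1))) * (1 - c * a) ^ (p + 1)) := by
        apply intervalIntegral.integral_eq_sub_of_hasDerivAt
          (fun x _ => hderivF p x)
        exact (Continuous.intervalIntegrable (by continuity) _ _)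
      simpa using this
    simp only [pow_zero] at *
    rw [key, h0, zero_pow (by omega)]
    simp only [zero_add, Finset.sum_range_one, Nat.sub_zero, Nat.add_zero, add_zero,
      Nat.factorial_zero, pow_one, pow_zero]
    have hp1 : ((p : ℝ) + 1) ≠ 0 := by positivity
    have hpf : ((p.factorial : ℝ)) ≠ 0 := Nat.cast_ne_zero.mpr p.factorial_ne_zero
    rw [Nat.factorial_succ]
    push_cast
    field_simp
    ring
  | succ m ih =>
    intro p
    have hu : ∀ x ∈ Set.uIcc a (1/c), HasDerivAt (fun y => y ^ (m + 1)) ((m + 1 : ℝ) * x ^ m) x := by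
      intro x _
      simpa using hasDerivAt_pow (m + 1) x
    have hv : ∀ x ∈ Set.uIcc a (1/c),
        HasDerivAt (fun y => -(1 / (c * (p + 1))) * (1 - c * y) ^ (p + 1)) ((1 - c * x) ^ p) x :=
      fun x _ => hderivF p x
    have hibp := intervalIntegral.integral_mul_deriv_eq_deriv_mul hu hv
      (Continuous.intervalIntegrable (by continuity) _ _)
      (Continuous.intervalIntegrable (by continuity) _ _)
    rw [hibp]
    have hp1 : ((p : ℝ) + 1) ≠ 0 := by positivity
    have h2 : (∫ x in a..(1/c), (m + 1 : ℝ) * x ^ m * (-(1 / (c * (p + 1))) * (1 - c * x) ^ (p + 1)))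
        = (-(m + 1 : ℝ) / (c * (p + 1))) * ∫ x in a..(1/c), x ^ m * (1 - c * x) ^ (p + 1) := by
      rw [← intervalIntegral.integral_const_mul]
      apply intervalIntegral.integral_congr
      intro x _
      ring
    rw [h2, ih (p + 1), h0, zero_pow (by omega)]
    conv_rhs => rw [Finset.sum_range_succ']
    have hterm : ∀ μ ∈ Finset.range (m + 1),
        ((m+1).factorial : ℝ) / ((m + 1) - (μ + 1)).factorial
          * ((p.factorial : ℝ) / (p + (μ + 1) + 1).factorial)
          * (1 / c ^ ((μ + 1) + 1)) * a ^ ((m + 1) - (μ + 1)) * (1 - c * a) ^ (p + (μ + 1) + 1)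
        = ((m : ℝ) + 1) / (c * (p + 1)) *
          ((m.factorial : ℝ) / (m - μ).factorial * (((p+1).factorial : ℝ) / (p + 1 + μ + 1).factorial)
            * (1 / c ^ (μ + 1)) * a ^ (m - μ) * (1 - c * a) ^ (p + 1 + μ + 1)) := by
      intro μ hμ
      have e1 : (m + 1) - (μ + 1) = m - μ := by omega
      have e2 : p + (μ + 1) + 1 = p + 1 + μ + 1 := by omega
      rw [e1, e2, Nat.factorial_succ m, Nat.factorial_succ p]
      have h3 : ((p + 1 + μ + 1).factorial : ℝ) ≠ 0 := Nat.cast_ne_zero.mpr (Nat.factorial_ne_zero _)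
      have h4 : ((m - μ).factorial : ℝ) ≠ 0 := Nat.cast_ne_zero.mpr (Nat.factorial_ne_zero _)
      push_cast
      field_simp
      ring
    rw [Finset.sum_congr rfl hterm, ← Finset.mul_sum]
    generalize (∑ μ ∈ Finset.range (m + 1),
      ((m.factorial : ℝ) / (m - μ).factorial * (((p+1).factorial : ℝ) / (p + 1 + μ + 1).factorial)
        * (1 / c ^ (μ + 1)) * a ^ (m - μ) * (1 - c * a) ^ (p + 1 + μ + 1))) = S
    simp only [Nat.sub_zero, Nat.add_zero, add_zero]
    have hmf : ((m+1).factorial : ℝ) ≠ 0 := Nat.cast_ne_zero.mpr (Nat.factorial_ne_zero _)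
    have hpf : ((p.factorial : ℝ)) ≠ 0 := Nat.cast_ne_zero.mpr p.factorial_ne_zero
    rw [Nat.factorial_succ p]
    push_cast
    field_simp
    ring

/-- **Lemma 2.** For positive integers `n`, `k < n` and `m`,
`∑_{ν=k}^{n-1} ∫_{1/(ν+1)}^{1/ν} x^m (1-kx)^(n-2) dx
  = ∑_{μ=0}^m (1/k^{μ+1}) (m!(n-2)!)/((m-μ)!(n+μ-1)!) (n-k)^{n+μ-1}/n^{n+m-1}`. -/
theorem sum_integral_x_pow_mul_one_sub_kx_pow
    (n k m : ℕ) (hn : 0 < n) (hk : 0 < k) (hm : 0 < m) (hkn : k < n) :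
    ∑ ν ∈ Finset.Icc k (n - 1),
        ∫ x in (1 / ((ν : ℝ) + 1))..(1 / (ν : ℝ)), x ^ m * (1 - k * x) ^ (n - 2) =
      ∑ μ ∈ Finset.range (m + 1),
        (1 / (k : ℝ) ^ (μ + 1)) *
          ((m.factorial * (n - 2).factorial : ℝ) /
            ((m - μ).factorial * (n + μ - 1).factorial)) *
          (((n : ℝ) - k) ^ (n + μ - 1) / (n : ℝ) ^ (n + m - 1)) := by
  have hn2 : 2 ≤ n := by omega
  have hk0 : (k : ℝ) ≠ 0 := Nat.cast_ne_zero.mpr (by omega)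
  have hn0 : (n : ℝ) ≠ 0 := Nat.cast_ne_zero.mpr (by omega)
  rw [tele (fun x : ℝ => x ^ m * (1 - (k : ℝ) * x) ^ (n - 2)) (by continuity) k hk n hkn.le,
    intJ (k : ℝ) (1 / (n : ℝ)) hk0 m (n - 2)]
  apply Finset.sum_congr rfl
  intro μ hμ
  have hμm : μ ≤ m := by
    have := Finset.mem_range.mp hμ; omega
  have e1 : (n - 2) + μ + 1 = n + μ - 1 := by omega
  have e3 : (m - μ) + (n + μ - 1) = n + m - 1 := by omega
  rw [e1]
  have h1k : 1 - (k : ℝ) * (1 / n) = ((n : ℝ) - k) / n := by field_simp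
  rw [h1k]
  have hpow : ((n : ℝ)) ^ (m - μ) * (n : ℝ) ^ (n + μ - 1) = (n : ℝ) ^ (n + m - 1) := by
    rw [← pow_add, e3]
  have hfm : ((m - μ).factorial : ℝ) ≠ 0 := Nat.cast_ne_zero.mpr (Nat.factorial_ne_zero _)
  have hfn : ((n + μ - 1).factorial : ℝ) ≠ 0 := Nat.cast_ne_zero.mpr (Nat.factorial_ne_zero _)
  rw [← hpow]
  field_simp
  ring_nf
  have hinv : (n:ℝ) * (n:ℝ)⁻¹ - (n:ℝ)⁻¹ * k = (n:ℝ)⁻¹ * (n - k) := by field_simp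
  rw [hinv, mul_pow, inv_pow, inv_pow]
  field_simp
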